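/- Assume S satisfies identity (1). Let C ⊆ B, let e₁, e₂ ∈ E(S) ∪ {□}, let t₁ ∈ β(P^C[e₁]) be left saturated and let t₂ ∈ β(S^C[e₂]) be right saturated. Then there exists r ∈ M such that t₁·β(w)·t₂ = r for every w ∈ T^C[e₁,e₂]. -/

import Mathlib

/-- The type of letters of the alphabet `B = (E(S) ∪ {□}) × M × (E(S) ∪ {□})`:
a guard is an element of `Option M`, where `none` plays the role of `□`. -/
abbrev BLetter (M : Type*) := Option M × M × Option M

/-- A guard is valid if it is `□` or an idempotent element of `S`. -/
def GuardOK {M : Type*} [Monoid M] (S : Set M) (g : Option M) : Prop :=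
  ∀ m : M, g = some m → m ∈ S ∧ m * m = m

/-- The set of letters of the alphabet `B`. -/
def Bset {M : Type*} [Monoid M] (S : Set M) : Set (BLetter M) :=
  {b | GuardOK S b.1 ∧ GuardOK S b.2.2}

/-- The value `β(b)` of a letter `b = (e,s,f)`: it is `e·s·f` where a `□` guard
is interpreted as `1`. This encodes the four cases `β((e,s,f)) = e·s·f`,
`β((□,s,f)) = s·f`, `β((e,s,□)) = e·s` and `β((□,s,□)) = s`. -/
def letterVal {M : Type*} [Monoid M] (b : BLetter M) : M :=
  b.1.getD 1 * b.2.1 * b.2.2.getD 1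

/-- The morphism `β : B* → M`. -/
def betaWord {M : Type*} [Monoid M] (u : List (BLetter M)) : M :=
  (u.map letterVal).prod

/-- A word `(e₀,s₀,f₀)⋯(e_n,s_n,f_n) ∈ B*` is pseudo well-formed when
`f_i = e_{i+1} ∈ E(S)` for every `i < n` (the empty word and one-letter words
are pseudo well-formed). -/
def PseudoWF {M : Type*} [Monoid M] (S : Set M) : List (BLetter M) → Prop
  | [] => True
  | [_] => True
  | b₁ :: b₂ :: rest =>
      (∃ g : M, g ∈ S ∧ g * g = g ∧ b₁.2.2 = some g ∧ b₂.1 = some g) ∧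
      PseudoWF S (b₂ :: rest)

/-- The left guard `e₀` of a word `(e₀,s₀,f₀)⋯(e_n,s_n,f_n)` (junk on `ε`). -/
def leftGuard {M : Type*} [Monoid M] (u : List (BLetter M)) : Option M :=
  (u.headD (none, 1, none)).1

/-- The right guard `f_n` of a word `(e₀,s₀,f₀)⋯(e_n,s_n,f_n)` (junk on `ε`). -/
def rightGuard {M : Type*} [Monoid M] (u : List (BLetter M)) : Option M :=
  (u.getLastD (none, 1, none)).2.2

/-- A word of `B*` is well-formed if it is nonempty, pseudo well-formed and both
its guards are `□`. -/
def WellFormed {M : Type*} [Monoid M] (S : Set M) (u : List (BLetter M)) : Prop :=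
  u ≠ [] ∧ PseudoWF S u ∧ leftGuard u = none ∧ rightGuard u = none

/-- `T^C[e,f]`: nonempty pseudo well-formed words over `C` with left guard `e` and
right guard `f`, together with `ε` when `e = f ∈ E(S)`. -/
def Tset {M : Type*} [Monoid M] (S : Set M) (C : Set (BLetter M)) (e f : Option M) :
    Set (List (BLetter M)) :=
  {u | (u ≠ [] ∧ (∀ b ∈ u, b ∈ C) ∧ PseudoWF S u ∧ leftGuard u = e ∧ rightGuard u = f)
    ∨ (u = [] ∧ e = f ∧ ∃ g : M, g ∈ S ∧ g * g = g ∧ e = some g)}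

/-- `P^C[e]`: `{ε}` if `e = □`, and otherwise `ε` together with all nonempty pseudo
well-formed words over `C` with right guard `e`. -/
def Pset {M : Type*} [Monoid M] (S : Set M) (C : Set (BLetter M)) (e : Option M) :
    Set (List (BLetter M)) :=
  {u | u = [] ∨ (e ≠ none ∧ u ≠ [] ∧ (∀ b ∈ u, b ∈ C) ∧ PseudoWF S u ∧ rightGuard u = e)}

/-- `S^C[f]`: `{ε}` if `f = □`, and otherwise `ε` together with all nonempty pseudo
well-formed words over `C` with left guard `f`. -/
def Sset {M : Type*} [Monoid M] (S : Set M) (C : Set (BLetter M)) (f : Option M) :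
    Set (List (BLetter M)) :=
  {u | u = [] ∨ (f ≠ none ∧ u ≠ [] ∧ (∀ b ∈ u, b ∈ C) ∧ PseudoWF S u ∧ leftGuard u = f)}

/-- `t₁` is left saturated (w.r.t. `C` and `e₁`) when for every `f ∈ E(S) ∪ {□}`
and every `u ∈ T^C[e₁,f]`, `t₁ ∈ t₁·β(u)·M`. -/
def LeftSaturated {M : Type*} [Monoid M] (S : Set M) (C : Set (BLetter M))
    (e₁ : Option M) (t₁ : M) : Prop :=
  ∀ f : Option M, GuardOK S f → ∀ u ∈ Tset S C e₁ f,
    ∃ z : M, t₁ = t₁ * betaWord u * z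

/-- `t₂` is right saturated (w.r.t. `C` and `e₂`) when for every `f ∈ E(S) ∪ {□}`
and every `u ∈ T^C[f,e₂]`, `t₂ ∈ M·β(u)·t₂`. -/
def RightSaturated {M : Type*} [Monoid M] (S : Set M) (C : Set (BLetter M))
    (e₂ : Option M) (t₂ : M) : Prop :=
  ∀ f : Option M, GuardOK S f → ∀ u ∈ Tset S C f e₂,
    ∃ z : M, t₂ = z * betaWord u * t₂

section AuxListLemmas
set_option linter.unusedSectionVars false

variable {M : Type*} [Monoid M]

lemma betaWord_nil : betaWord ([] : List (BLetter M)) = 1 := rfl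

lemma betaWord_append (u v : List (BLetter M)) :
    betaWord (u ++ v) = betaWord u * betaWord v := by
  simp [betaWord]

lemma leftGuard_cons (b : BLetter M) (l : List (BLetter M)) :
    leftGuard (b :: l) = b.1 := rfl

lemma rightGuard_cons (b : BLetter M) {l : List (BLetter M)} (h : l ≠ []) :
    rightGuard (b :: l) = rightGuard l := by
  cases l with
  | nil => exact absurd rfl h
  | cons c t =>
      simp [rightGuard, List.getLastD_cons]

lemma rightGuard_single (b : BLetter M) : rightGuard [b] = b.2.2 := rfl

lemma rightGuard_append (p : List (BLetter M)) {w : List (BLetter M)} (hw : w ≠ []) :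
    rightGuard (p ++ w) = rightGuard w := by
  induction p with
  | nil => rfl
  | cons b t ih =>
      have ht : t ++ w ≠ [] := by
        intro h
        rcases List.append_eq_nil_iff.1 h with ⟨-, h2⟩
        exact hw h2
      rw [List.cons_append, rightGuard_cons b ht, ih]

lemma leftGuard_append {p : List (BLetter M)} (w : List (BLetter M)) (hp : p ≠ []) :
    leftGuard (p ++ w) = leftGuard p := by
  cases p with
  | nil => exact absurd rfl hp
  | cons b t => rfl

lemma headD_mem {p : List (BLetter M)} (hp : p ≠ []) (d : BLetter M) :
    p.headD d ∈ p := by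
  cases p with
  | nil => exact absurd rfl hp
  | cons b t => exact List.mem_cons_self

lemma getLastD_mem {p : List (BLetter M)} (hp : p ≠ []) (d : BLetter M) :
    p.getLastD d ∈ p := by
  induction p generalizing d with
  | nil => exact absurd rfl hp
  | cons b t ih =>
      cases t with
      | nil => exact List.mem_cons_self
      | cons c s =>
          rw [List.getLastD_cons]
          exact List.mem_cons_of_mem _ (ih (by simp) b)

lemma pseudoWF_cons_cons {S : Set M} {b₁ b₂ : BLetter M} {l : List (BLetter M)} :
    PseudoWF S (b₁ :: b₂ :: l) ↔
      ((∃ g : M, g ∈ S ∧ g * g = g ∧ b₁.2.2 = some g ∧ b₂.1 = some g) ∧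
        PseudoWF S (b₂ :: l)) := Iff.rfl

lemma pseudoWF_append {S : Set M} {g : M} (hg : g ∈ S) (hgg : g * g = g) :
    ∀ (p : List (BLetter M)), p ≠ [] → PseudoWF S p → rightGuard p = some g →
    ∀ (w : List (BLetter M)), w ≠ [] → PseudoWF S w → leftGuard w = some g →
    PseudoWF S (p ++ w) := by
  intro p
  induction p with
  | nil => intro h; exact absurd rfl h
  | cons b t ih =>
      intro _ hp hpr w hwne hw hwl
      cases t with
      | nil =>
          cases w with
          | nil => exact absurd rfl hwne
          | cons c s =>
              refine pseudoWF_cons_cons.2 ⟨⟨g, hg, hgg, ?_, ?_⟩, hw⟩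
              · rw [← rightGuard_single b]; exact hpr
              · exact hwl
      | cons b₂ t₂ =>
          obtain ⟨hj, hp'⟩ := pseudoWF_cons_cons.1 hp
          have hr : rightGuard (b₂ :: t₂) = some g := by
            rw [← rightGuard_cons b (l := b₂ :: t₂) (by simp)]; exact hpr
          have := ih (by simp) hp' hr w hwne hw hwl
          exact pseudoWF_cons_cons.2 ⟨hj, this⟩

lemma idem_pow {a : M} (h : a * a = a) : ∀ k : ℕ, a ^ (k + 1) = a := by
  intro k
  induction k with
  | zero => exact pow_one a
  | succ k ih => rw [pow_succ, ih, h]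

end AuxListLemmas
/-- Assume `S` satisfies identity (1). Let `C ⊆ B`, `e₁, e₂ ∈ E(S) ∪ {□}`, let
`t₁ ∈ β(P^C[e₁])` be left saturated and `t₂ ∈ β(S^C[e₂])` be right saturated.
Then there exists `r ∈ M` such that `t₁·β(w)·t₂ = r` for every `w ∈ T^C[e₁,e₂]`. -/
theorem stmt_12 {A M : Type*} [Fintype A] [Fintype M] [Monoid M]
    (α : List A → M) (hα1 : α [] = 1)
    (hαmul : ∀ u v : List A, α (u ++ v) = α u * α v)
    (hαsurj : Function.Surjective α)
    (S : Set M) (hS : S = {m : M | ∃ u : List A, u ≠ [] ∧ α u = m})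
    (hId : ∀ s ∈ S, ∀ t ∈ S, ∀ e ∈ S, e * e = e → ∀ n : ℕ, 1 ≤ n →
      (e * s * e * t * e) ^ n * (e * s * e * t * e) ^ n = (e * s * e * t * e) ^ n →
      (e * s * e * t * e) ^ n * t * (e * s * e * t * e) ^ n = (e * s * e * t * e) ^ n)
    (C : Set (BLetter M)) (hC : C ⊆ Bset S)
    (e₁ e₂ : Option M) (he₁ : GuardOK S e₁) (he₂ : GuardOK S e₂)
    (t₁ : M) (ht₁ : ∃ p ∈ Pset S C e₁, betaWord p = t₁)
    (ht₁sat : LeftSaturated S C e₁ t₁)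
    (t₂ : M) (ht₂ : ∃ p ∈ Sset S C e₂, betaWord p = t₂)
    (ht₂sat : RightSaturated S C e₂ t₂) :
    ∃ r : M, ∀ w ∈ Tset S C e₁ e₂, t₁ * betaWord w * t₂ = r := by
  classical
  -- Every element of M is in S or equal to 1
  have hSmem : ∀ m : M, m ∈ S ∨ m = 1 := by
    intro m
    obtain ⟨u, hu⟩ := hαsurj m
    cases u with
    | nil => right; rw [← hu, hα1]
    | cons a t => left; rw [hS]; exact ⟨a :: t, by simp, hu⟩
  have hSmul : ∀ s ∈ S, ∀ t ∈ S, s * t ∈ S := by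
    intro s hs t ht
    rw [hS] at hs ht ⊢
    obtain ⟨u, hu, hus⟩ := hs
    obtain ⟨v, hv, hvt⟩ := ht
    exact ⟨u ++ v, by simp [hu], by rw [hαmul, hus, hvt]⟩
  have hSpow : ∀ m ∈ S, ∀ k : ℕ, m ^ (k + 1) ∈ S := by
    intro m hm k
    induction k with
    | zero => simpa using hm
    | succ k ih => rw [pow_succ]; exact hSmul _ ih _ hm
  -- existence of idempotent powers
  have hidpow : ∀ m : M, ∃ N : ℕ, 1 ≤ N ∧ m ^ N * m ^ N = m ^ N := by
    intro m
    have key : ∀ i j : ℕ, i < j → m ^ i = m ^ j →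
        ∃ N : ℕ, 1 ≤ N ∧ m ^ N * m ^ N = m ^ N := by
      intro i j hlt he
      have hd1 : 1 ≤ j - i := by omega
      have hstep : ∀ s : ℕ, i ≤ s → m ^ (s + (j - i)) = m ^ s := by
        intro s hs
        have h1 : s + (j - i) = j + (s - i) := by omega
        have h2 : s = i + (s - i) := by omega
        rw [h1, pow_add, ← he, ← pow_add, ← h2]
      have hmany : ∀ k s : ℕ, i ≤ s → m ^ (s + k * (j - i)) = m ^ s := by
        intro k
        induction k with
        | zero => intro s hs; simp
        | succ k ih =>
            intro s hs
            have h3 : s + (k + 1) * (j - i) = (s + k * (j - i)) + (j - i) := by ring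
            rw [h3, hstep _ (le_trans hs (Nat.le_add_right _ _)), ih s hs]
      refine ⟨(i + 1) * (j - i), ?_, ?_⟩
      · have := Nat.mul_pos (show 0 < i + 1 by omega) (show 0 < j - i by omega)
        omega
      · have hle : i ≤ (i + 1) * (j - i) := by
          have : (i + 1) * 1 ≤ (i + 1) * (j - i) := Nat.mul_le_mul_left _ hd1
          omega
        rw [← pow_add, hmany (i + 1) _ hle]
    obtain ⟨i, j, hne, heq⟩ := Finite.exists_ne_map_eq_of_infinite (fun k : ℕ => m ^ k)
    rcases Nat.lt_or_ge i j with h | h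
    · exact key i j h heq
    · have h' : j < i := by omega
      exact key j i h' heq.symm
  -- aperiodicity
  have hap : ∀ m : M, ∃ k : ℕ, m ^ (k + 1) = m ^ k := by
    intro m
    rcases hSmem m with hm | hm
    · obtain ⟨N, hN1, hNidem⟩ := hidpow m
      have hgS : m ^ N ∈ S := by
        have hN : N - 1 + 1 = N := by omega
        rw [← hN]; exact hSpow m hm _
      have hE : m ^ N * m ^ N * m ^ N * m * m ^ N = m ^ (N + 1 + N) := by
        rw [hNidem, hNidem, pow_add, pow_add, pow_one]
      have hEN : (m ^ (N + 1 + N)) ^ N = m ^ N := by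
        rw [← pow_mul, show (N + 1 + N) * N = N * (N + N + 1) by ring, pow_mul,
          idem_pow hNidem]
      have key := hId (m ^ N) hgS m hm (m ^ N) hgS hNidem N hN1
        (by rw [hE, hEN]; exact hNidem)
      rw [hE, hEN] at key
      -- key : m ^ N * m * m ^ N = m ^ N
      have h1 : m ^ (N + 1 + N) = m ^ N := by
        rw [pow_add, pow_add, pow_one]; exact key
      have hidem1 : m ^ (N + 1) * m ^ (N + 1) = m ^ (N + 1) := by
        rw [← pow_add, show N + 1 + (N + 1) = (N + 1 + N) + 1 from by ring,
          pow_succ, h1, ← pow_succ]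
      refine ⟨N, ?_⟩
      have e1 : m ^ (N * (N + 1)) = m ^ N := by rw [pow_mul, idem_pow hNidem]
      obtain ⟨k, rfl⟩ : ∃ k, N = k + 1 := ⟨N - 1, by omega⟩
      have e2 : m ^ ((k + 1 + 1) * (k + 1)) = m ^ (k + 1 + 1) := by
        rw [pow_mul, idem_pow hidem1]
      rw [← e2, show (k + 1 + 1) * (k + 1) = (k + 1) * (k + 1 + 1) by ring, e1]
    · rw [hm]; exact ⟨0, by simp⟩
  -- the two-sided aperiodic trick
  have trick : ∀ a b v u : M, b = a * v → a = u * b → a = b := by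
    intro a b v u h1 h2
    have hk : ∀ k : ℕ, b = u ^ k * b * v ^ k := by
      intro k
      induction k with
      | zero => simp
      | succ k ih =>
          calc b = a * v := h1
          _ = u * b * v := by rw [h2]
          _ = u * (u ^ k * b * v ^ k) * v := by rw [← ih]
          _ = u ^ (k + 1) * b * v ^ (k + 1) := by
              rw [pow_succ' u k, pow_succ v k]; simp [mul_assoc]
    obtain ⟨k, hkap⟩ := hap u
    calc a = u * b := h2
    _ = u * (u ^ k * b * v ^ k) := by rw [← hk k]
    _ = u ^ (k + 1) * b * v ^ k := by rw [pow_succ' u k]; simp [mul_assoc]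
    _ = u ^ k * b * v ^ k := by rw [hkap]
    _ = b := (hk k).symm
  obtain ⟨p, hp, hpt⟩ := ht₁
  obtain ⟨q, hq, hqt⟩ := ht₂
  -- K1 : t₂ is a left multiple of t₁ * β(w) * t₂
  have K1 : ∀ w ∈ Tset S C e₁ e₂, ∃ z : M, t₂ = z * (t₁ * betaWord w * t₂) := by
    intro w hw
    rcases hp with hpnil | ⟨he₁ne, hpne, hpC, hpWF, hpr⟩
    · have ht1 : t₁ = 1 := by rw [← hpt, hpnil]; rfl
      obtain ⟨z, hz⟩ := ht₂sat e₁ he₁ w hw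
      refine ⟨z, ?_⟩
      rw [ht1, one_mul, ← mul_assoc]
      exact hz
    · have hGOK : GuardOK S (leftGuard p) := by
        have hb : p.headD (none, 1, none) ∈ p := headD_mem hpne _
        exact (hC (hpC _ hb)).1
      obtain ⟨g, hg⟩ : ∃ g, e₁ = some g := Option.ne_none_iff_exists'.1 he₁ne
      obtain ⟨hgS, hgg⟩ := he₁ g hg
      rcases hw with ⟨hwne, hwC, hwWF, hwl, hwr⟩ | ⟨hwnil, hee, -⟩
      · have hmem : (p ++ w) ∈ Tset S C (leftGuard p) e₂ := by
          left
          refine ⟨?_, ?_, ?_, ?_, ?_⟩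
          · intro h; exact hpne (List.append_eq_nil_iff.1 h).1
          · intro b hb
            rcases List.mem_append.1 hb with h | h
            exacts [hpC b h, hwC b h]
          · exact pseudoWF_append hgS hgg p hpne hpWF (by rw [hpr, hg]) w hwne hwWF
              (by rw [hwl, hg])
          · exact leftGuard_append w hpne
          · rw [rightGuard_append p hwne, hwr]
        obtain ⟨z, hz⟩ := ht₂sat (leftGuard p) hGOK (p ++ w) hmem
        refine ⟨z, ?_⟩
        rw [betaWord_append, hpt] at hz
        simpa only [mul_assoc] using hz
      · have hmem : p ∈ Tset S C (leftGuard p) e₂ := by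
          left
          exact ⟨hpne, hpC, hpWF, rfl, by rw [hpr, hee]⟩
        obtain ⟨z, hz⟩ := ht₂sat (leftGuard p) hGOK p hmem
        refine ⟨z, ?_⟩
        rw [hwnil]
        simp only [betaWord_nil, mul_one]
        rw [hpt] at hz
        simpa only [mul_assoc] using hz
  -- K2 : t₁ is a right multiple of t₁ * β(w) * t₂
  have K2 : ∀ w ∈ Tset S C e₁ e₂, ∃ z : M, t₁ = (t₁ * betaWord w * t₂) * z := by
    intro w hw
    rcases hq with hqnil | ⟨he₂ne, hqne, hqC, hqWF, hql⟩
    · have ht2 : t₂ = 1 := by rw [← hqt, hqnil]; rfl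
      obtain ⟨z, hz⟩ := ht₁sat e₂ he₂ w hw
      refine ⟨z, ?_⟩
      rw [ht2, mul_one]
      exact hz
    · have hGOK : GuardOK S (rightGuard q) := by
        have hb : q.getLastD (none, 1, none) ∈ q := getLastD_mem hqne _
        exact (hC (hqC _ hb)).2
      obtain ⟨g, hg⟩ : ∃ g, e₂ = some g := Option.ne_none_iff_exists'.1 he₂ne
      obtain ⟨hgS, hgg⟩ := he₂ g hg
      rcases hw with ⟨hwne, hwC, hwWF, hwl, hwr⟩ | ⟨hwnil, hee, -⟩
      · have hmem : (w ++ q) ∈ Tset S C e₁ (rightGuard q) := by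
          left
          refine ⟨?_, ?_, ?_, ?_, ?_⟩
          · intro h; exact hqne (List.append_eq_nil_iff.1 h).2
          · intro b hb
            rcases List.mem_append.1 hb with h | h
            exacts [hwC b h, hqC b h]
          · exact pseudoWF_append hgS hgg w hwne hwWF (by rw [hwr, hg]) q hqne hqWF
              (by rw [hql, hg])
          · rw [leftGuard_append q hwne, hwl]
          · exact rightGuard_append w hqne
        obtain ⟨z, hz⟩ := ht₁sat (rightGuard q) hGOK (w ++ q) hmem
        refine ⟨z, ?_⟩
        rw [betaWord_append, hqt] at hz
        simpa only [mul_assoc] using hz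
      · have hmem : q ∈ Tset S C e₁ (rightGuard q) := by
          left
          refine ⟨hqne, hqC, hqWF, ?_, rfl⟩
          rw [hql]; exact hee.symm
        obtain ⟨z, hz⟩ := ht₁sat (rightGuard q) hGOK q hmem
        refine ⟨z, ?_⟩
        rw [hwnil]
        simp only [betaWord_nil, mul_one]
        rw [hqt] at hz
        exact hz
  -- main argument
  by_cases hne : ∃ w₀, w₀ ∈ Tset S C e₁ e₂
  · obtain ⟨w₀, hw₀⟩ := hne
    refine ⟨t₁ * betaWord w₀ * t₂, ?_⟩
    intro w hw
    obtain ⟨z₀, hz₀⟩ := K1 w₀ hw₀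
    obtain ⟨u, hu⟩ := K2 w hw
    apply trick (t₁ * betaWord w * t₂) (t₁ * betaWord w₀ * t₂)
      (u * betaWord w₀ * t₂) (t₁ * betaWord w * z₀)
    · calc t₁ * betaWord w₀ * t₂
          = ((t₁ * betaWord w * t₂) * u) * betaWord w₀ * t₂ := by rw [← hu]
      _ = (t₁ * betaWord w * t₂) * (u * betaWord w₀ * t₂) := by simp [mul_assoc]
    · calc t₁ * betaWord w * t₂
          = t₁ * betaWord w * (z₀ * (t₁ * betaWord w₀ * t₂)) := by rw [← hz₀]
      _ = (t₁ * betaWord w * z₀) * (t₁ * betaWord w₀ * t₂) := by simp [mul_assoc]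
  · exact ⟨1, fun w hw => absurd ⟨w, hw⟩ hne⟩
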